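/- Let Q = {P_1,…,P_l} be a measurement scheme that determines any pure state among all states, and set c := inf{ ‖M_Q(X)‖ : X ∈ K }, where K = {X ∈ H(d) : λ₂(X) ≤ 0, ‖X‖ = 1}. Then for every measurement scheme Q′ = {P′_1,…,P′_l} with the same outcome set satisfying ‖M_Q − M_{Q′}‖_∞ < c, the scheme Q′ determines any pure state among all states. -/

import Mathlib

open Matrix ComplexOrder

noncomputable def frobNorm {n m : Type*} [Fintype n] [Fintype m] {𝕜 : Type*} [RCLike 𝕜]
    (X : Matrix n m 𝕜) : ℝ :=
  Real.sqrt (∑ i, ∑ j, ‖X i j‖ ^ 2)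

def IsPOVM {d m : ℕ} (P : Fin m → Matrix (Fin d) (Fin d) ℂ) : Prop :=
  (∀ j, (P j).PosSemidef) ∧ (∑ j, P j) = 1

def IsMeasScheme {d l m : ℕ} (Q : Fin l → Fin m → Matrix (Fin d) (Fin d) ℂ) : Prop :=
  ∀ i, IsPOVM (Q i)

noncomputable def measMap {d l m : ℕ} (Q : Fin l → Fin m → Matrix (Fin d) (Fin d) ℂ)
    (X : Matrix (Fin d) (Fin d) ℂ) : Matrix (Fin l) (Fin m) ℝ :=
  Matrix.of fun i j => (Matrix.trace (X * Q i j)).re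

noncomputable def pureState {d : ℕ} (ψ : Fin d → ℂ) : Matrix (Fin d) (Fin d) ℂ :=
  Matrix.vecMulVec ψ (star ψ)

def IsState {d : ℕ} (ρ : Matrix (Fin d) (Fin d) ℂ) : Prop :=
  ρ.PosSemidef ∧ ρ.trace = 1

def DeterminesPure {d l m : ℕ} (Q : Fin l → Fin m → Matrix (Fin d) (Fin d) ℂ) : Prop :=
  ∀ ψ : Fin d → ℂ, (∑ k, Complex.normSq (ψ k)) = 1 →
    ∀ ρ : Matrix (Fin d) (Fin d) ℂ, IsState ρ →
      measMap Q (pureState ψ) = measMap Q ρ → ρ = pureState ψ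

noncomputable def posEigCount {d : ℕ} {X : Matrix (Fin d) (Fin d) ℂ} (hX : X.IsHermitian) : ℕ :=
  Nat.card {i : Fin d // 0 < hX.eigenvalues i}

def Kset (d : ℕ) : Set (Matrix (Fin d) (Fin d) ℂ) :=
  {X | ∃ hX : X.IsHermitian, posEigCount hX ≤ 1 ∧ frobNorm X = 1}

noncomputable def opNormHerm {d l m : ℕ}
    (T : Matrix (Fin d) (Fin d) ℂ → Matrix (Fin l) (Fin m) ℝ) : ℝ :=
  sSup {r : ℝ | ∃ X : Matrix (Fin d) (Fin d) ℂ, X.IsHermitian ∧ frobNorm X = 1 ∧ r = frobNorm (T X)}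

/-! ### Auxiliary lemmas -/

lemma frobNorm_nonneg {n m : Type*} [Fintype n] [Fintype m] {𝕜 : Type*} [RCLike 𝕜]
    (X : Matrix n m 𝕜) : 0 ≤ frobNorm X := Real.sqrt_nonneg _

lemma entry_le_frobNorm {n m : Type*} [Fintype n] [Fintype m] {𝕜 : Type*} [RCLike 𝕜]
    (X : Matrix n m 𝕜) (i : n) (j : m) : ‖X i j‖ ≤ frobNorm X := by
  have h1 : ‖X i j‖ ^ 2 ≤ ∑ i, ∑ j, ‖X i j‖ ^ 2 := by
    calc ‖X i j‖ ^ 2 ≤ ∑ j, ‖X i j‖ ^ 2 :=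
          Finset.single_le_sum (f := fun j => ‖X i j‖ ^ 2) (fun k _ => sq_nonneg _)
            (Finset.mem_univ j)
      _ ≤ ∑ i, ∑ j, ‖X i j‖ ^ 2 :=
          Finset.single_le_sum (f := fun i => ∑ j, ‖X i j‖ ^ 2)
            (fun k _ => Finset.sum_nonneg fun _ _ => sq_nonneg _) (Finset.mem_univ i)
  calc ‖X i j‖ = Real.sqrt (‖X i j‖ ^ 2) := (Real.sqrt_sq (norm_nonneg _)).symm
    _ ≤ frobNorm X := Real.sqrt_le_sqrt h1

lemma frobNorm_eq_zero {n m : Type*} [Fintype n] [Fintype m] {𝕜 : Type*} [RCLike 𝕜]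
    {X : Matrix n m 𝕜} (h : frobNorm X = 0) : X = 0 := by
  ext i j
  have := entry_le_frobNorm X i j
  rw [h] at this
  simpa using le_antisymm this (norm_nonneg _)

lemma frobNorm_smul {n m : Type*} [Fintype n] [Fintype m] {𝕜 : Type*} [RCLike 𝕜]
    (c : 𝕜) (X : Matrix n m 𝕜) : frobNorm (c • X) = ‖c‖ * frobNorm X := by
  unfold frobNorm
  have : ∀ i j, ‖(c • X) i j‖ ^ 2 = ‖c‖ ^ 2 * ‖X i j‖ ^ 2 := by
    intro i j
    simp [Matrix.smul_apply, norm_smul, mul_pow]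
  simp_rw [this, ← Finset.mul_sum]
  rw [Real.sqrt_mul (sq_nonneg _), Real.sqrt_sq (norm_nonneg _)]

lemma quad_form_val {d : ℕ} (Y : Matrix (Fin d) (Fin d) ℂ) (u₁ u₂ : Fin d → ℂ)
    (l₁ l₂ : ℝ) (c₁ c₂ : ℂ)
    (hY₁ : Y *ᵥ u₁ = (l₁ : ℂ) • u₁) (hY₂ : Y *ᵥ u₂ = (l₂ : ℂ) • u₂)
    (h11 : star u₁ ⬝ᵥ u₁ = 1) (h12 : star u₁ ⬝ᵥ u₂ = 0)
    (h21 : star u₂ ⬝ᵥ u₁ = 0) (h22 : star u₂ ⬝ᵥ u₂ = 1) :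
    star (c₁ • u₁ + c₂ • u₂) ⬝ᵥ (Y *ᵥ (c₁ • u₁ + c₂ • u₂))
      = ((Complex.normSq c₁ * l₁ + Complex.normSq c₂ * l₂ : ℝ) : ℂ) := by
  rw [Matrix.mulVec_add, Matrix.mulVec_smul, Matrix.mulVec_smul, hY₁, hY₂]
  simp only [star_add, star_smul, add_dotProduct, dotProduct_add,
    smul_dotProduct, dotProduct_smul, smul_smul, h11, h12, h21, h22]
  simp only [smul_eq_mul, mul_one, mul_zero, add_zero, zero_add,
    Complex.ofReal_add, Complex.ofReal_mul]
  rw [← Complex.mul_conj, ← Complex.mul_conj]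
  simp only [Complex.star_def]
  ring

lemma posEigCount_le_one {d : ℕ} {Y : Matrix (Fin d) (Fin d) ℂ} (hY : Y.IsHermitian)
    (ψ : Fin d → ℂ)
    (h : ∀ v : Fin d → ℂ, star ψ ⬝ᵥ v = 0 → star v ⬝ᵥ (Y *ᵥ v) ≤ 0) :
    posEigCount hY ≤ 1 := by
  by_contra hc
  push_neg at hc
  rw [posEigCount, Nat.card_eq_fintype_card, Fintype.one_lt_card_iff] at hc
  obtain ⟨⟨i₁, hi₁⟩, ⟨i₂, hi₂⟩, hne⟩ := hc
  have hij : i₁ ≠ i₂ := fun h => hne (by simpa using h)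
  have horth := hY.eigenvectorBasis.orthonormal
  rw [orthonormal_iff_ite] at horth
  have hdot : ∀ i j : Fin d, star (⇑(hY.eigenvectorBasis i)) ⬝ᵥ ⇑(hY.eigenvectorBasis j)
      = if i = j then 1 else 0 := by
    intro i j
    have := horth i j
    rwa [EuclideanSpace.inner_eq_star_dotProduct, dotProduct_comm] at this
  have hmv : ∀ i : Fin d, Y *ᵥ ⇑(hY.eigenvectorBasis i)
      = ((hY.eigenvalues i : ℝ) : ℂ) • ⇑(hY.eigenvectorBasis i) := by
    intro i
    rw [hY.mulVec_eigenvectorBasis]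
    ext k
    simp [Complex.real_smul]
  have key := fun c₁ c₂ => quad_form_val Y _ _ _ _ c₁ c₂ (hmv i₁) (hmv i₂)
    (by rw [hdot, if_pos rfl]) (by rw [hdot, if_neg hij])
    (by rw [hdot, if_neg (Ne.symm hij)]) (by rw [hdot, if_pos rfl])
  set a : ℂ := star ψ ⬝ᵥ ⇑(hY.eigenvectorBasis i₁) with ha
  set b : ℂ := star ψ ⬝ᵥ ⇑(hY.eigenvectorBasis i₂) with hb
  by_cases hab : a = 0 ∧ b = 0
  · have hv : star ψ ⬝ᵥ ((1:ℂ) • ⇑(hY.eigenvectorBasis i₁)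
        + (0:ℂ) • ⇑(hY.eigenvectorBasis i₂)) = 0 := by
      simp [dotProduct_add, dotProduct_smul, ← ha, ← hb, hab.1]
    have := h _ hv
    rw [key 1 0] at this
    simp only [Complex.normSq_one, one_mul, Complex.normSq_zero, zero_mul, add_zero] at this
    rw [← Complex.ofReal_zero, Complex.real_le_real] at this
    linarith
  · have hv : star ψ ⬝ᵥ (b • ⇑(hY.eigenvectorBasis i₁)
        + (-a) • ⇑(hY.eigenvectorBasis i₂)) = 0 := by
      simp only [dotProduct_add, dotProduct_smul, ← ha, ← hb, smul_eq_mul]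
      ring
    have := h _ hv
    rw [key b (-a)] at this
    rw [← Complex.ofReal_zero, Complex.real_le_real] at this
    have hpos : 0 < Complex.normSq b * hY.eigenvalues i₁
        + Complex.normSq (-a) * hY.eigenvalues i₂ := by
      rcases not_and_or.mp hab with hA | hB
      · have : 0 < Complex.normSq (-a) := by simpa [Complex.normSq_pos] using hA
        have h1 : 0 ≤ Complex.normSq b * hY.eigenvalues i₁ :=
          mul_nonneg (Complex.normSq_nonneg _) hi₁.le
        nlinarith
      · have : 0 < Complex.normSq b := by simpa [Complex.normSq_pos] using hB
        have h2 : 0 ≤ Complex.normSq (-a) * hY.eigenvalues i₂ :=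
          mul_nonneg (Complex.normSq_nonneg _) hi₂.le
        nlinarith
    linarith

lemma measMap_sub {d l m : ℕ} (Q : Fin l → Fin m → Matrix (Fin d) (Fin d) ℂ)
    (A B : Matrix (Fin d) (Fin d) ℂ) : measMap Q (A - B) = measMap Q A - measMap Q B := by
  ext i j
  simp [measMap, Matrix.sub_mul, Matrix.trace_sub, Complex.sub_re]

lemma measMap_real_smul {d l m : ℕ} (Q : Fin l → Fin m → Matrix (Fin d) (Fin d) ℂ)
    (r : ℝ) (X : Matrix (Fin d) (Fin d) ℂ) :
    measMap Q ((r : ℂ) • X) = r • measMap Q X := by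
  ext i j
  simp [measMap, Matrix.smul_mul, Matrix.trace_smul, Complex.real_smul,
    Complex.re_ofReal_mul]

lemma pureState_isHermitian {d : ℕ} (ψ : Fin d → ℂ) : (pureState ψ).IsHermitian := by
  ext i j
  simp [pureState, Matrix.conjTranspose_apply, Matrix.vecMulVec_apply, mul_comm]

lemma pureState_mulVec_eq_zero {d : ℕ} (ψ v : Fin d → ℂ) (hv : star ψ ⬝ᵥ v = 0) :
    pureState ψ *ᵥ v = 0 := by
  ext i
  have : ∑ j, ψ i * (star ψ j * v j) = ψ i * (star ψ ⬝ᵥ v) := by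
    rw [dotProduct, Finset.mul_sum]
  simp only [pureState, Matrix.mulVec, dotProduct, Matrix.vecMulVec_apply, Pi.zero_apply,
    mul_assoc]
  rw [this, hv, mul_zero]

lemma norm_trace_mul_le {d : ℕ} (X R : Matrix (Fin d) (Fin d) ℂ)
    (hX : ∀ a b, ‖X a b‖ ≤ 1) :
    ‖Matrix.trace (X * R)‖ ≤ ∑ a, ∑ b, ‖R a b‖ := by
  rw [Matrix.trace]
  calc ‖∑ a, (X * R).diag a‖ ≤ ∑ a, ‖(X * R).diag a‖ := norm_sum_le _ _
    _ ≤ ∑ a, ∑ b, ‖R b a‖ := by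
        apply Finset.sum_le_sum
        intro a _
        calc ‖(X * R).diag a‖ = ‖∑ b, X a b * R b a‖ := by
              simp [Matrix.diag, Matrix.mul_apply]
          _ ≤ ∑ b, ‖X a b * R b a‖ := norm_sum_le _ _
          _ ≤ ∑ b, ‖R b a‖ := by
              apply Finset.sum_le_sum
              intro b _
              rw [norm_mul]
              calc ‖X a b‖ * ‖R b a‖ ≤ 1 * ‖R b a‖ :=
                    mul_le_mul_of_nonneg_right (hX a b) (norm_nonneg _)
                _ = ‖R b a‖ := one_mul _
    _ = ∑ a, ∑ b, ‖R a b‖ := Finset.sum_comm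

lemma opNormSet_bddAbove {d l m : ℕ} (Q Q' : Fin l → Fin m → Matrix (Fin d) (Fin d) ℂ) :
    BddAbove {r : ℝ | ∃ X : Matrix (Fin d) (Fin d) ℂ, X.IsHermitian ∧ frobNorm X = 1 ∧
      r = frobNorm (measMap Q X - measMap Q' X)} := by
  set g : Fin l → Fin m → ℝ :=
    fun i j => (∑ a, ∑ b, ‖Q i j a b‖) + (∑ a, ∑ b, ‖Q' i j a b‖) with hg
  refine ⟨Real.sqrt (∑ i, ∑ j, (g i j) ^ 2), ?_⟩
  rintro r ⟨X, _, hX1, rfl⟩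
  have hXent : ∀ a b, ‖X a b‖ ≤ 1 := fun a b => hX1 ▸ entry_le_frobNorm X a b
  have hgnn : ∀ i j, 0 ≤ g i j := fun i j =>
    add_nonneg (Finset.sum_nonneg fun _ _ => Finset.sum_nonneg fun _ _ => norm_nonneg _)
      (Finset.sum_nonneg fun _ _ => Finset.sum_nonneg fun _ _ => norm_nonneg _)
  have hentry : ∀ i j, ‖(measMap Q X - measMap Q' X) i j‖ ≤ g i j := by
    intro i j
    have h1 : |(Matrix.trace (X * Q i j)).re| ≤ ∑ a, ∑ b, ‖Q i j a b‖ :=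
      le_trans (Complex.abs_re_le_norm _) (norm_trace_mul_le X (Q i j) hXent)
    have h2 : |(Matrix.trace (X * Q' i j)).re| ≤ ∑ a, ∑ b, ‖Q' i j a b‖ :=
      le_trans (Complex.abs_re_le_norm _) (norm_trace_mul_le X (Q' i j) hXent)
    have : (measMap Q X - measMap Q' X) i j
        = (Matrix.trace (X * Q i j)).re - (Matrix.trace (X * Q' i j)).re := by
      simp [measMap, Matrix.sub_apply]
    rw [this, Real.norm_eq_abs]
    calc |(Matrix.trace (X * Q i j)).re - (Matrix.trace (X * Q' i j)).re|
        ≤ |(Matrix.trace (X * Q i j)).re| + |(Matrix.trace (X * Q' i j)).re| := abs_sub _ _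
      _ ≤ g i j := add_le_add h1 h2
  unfold frobNorm
  apply Real.sqrt_le_sqrt
  apply Finset.sum_le_sum
  intro i _
  apply Finset.sum_le_sum
  intro j _
  exact pow_le_pow_left₀ (norm_nonneg _) (hentry i j) 2

theorem stmt7 {d l m : ℕ}
    (Q : Fin l → Fin m → Matrix (Fin d) (Fin d) ℂ) (hQ : IsMeasScheme Q)
    (hdet : DeterminesPure Q) :
    ∀ Q' : Fin l → Fin m → Matrix (Fin d) (Fin d) ℂ, IsMeasScheme Q' →
      opNormHerm (fun X => measMap Q X - measMap Q' X) <
        sInf {r : ℝ | ∃ X ∈ Kset d, r = frobNorm (measMap Q X)} →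
      DeterminesPure Q' := by
  intro Q' hQ' hlt ψ hψ ρ hρ heq
  by_contra hne
  set P : Matrix (Fin d) (Fin d) ℂ := pureState ψ with hP
  set X : Matrix (Fin d) (Fin d) ℂ := P - ρ with hX
  have hX0 : X ≠ 0 := by
    intro h0
    rw [hX, sub_eq_zero] at h0
    exact hne h0.symm
  have hfX : 0 < frobNorm X := by
    rcases lt_or_eq_of_le (frobNorm_nonneg X) with h | h
    · exact h
    · exact absurd (frobNorm_eq_zero h.symm) hX0
  set r : ℝ := (frobNorm X)⁻¹ with hr
  have hrpos : 0 < r := inv_pos.mpr hfX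
  set Y : Matrix (Fin d) (Fin d) ℂ := (r : ℂ) • X with hY
  have hfY : frobNorm Y = 1 := by
    rw [hY, frobNorm_smul, Complex.norm_real, Real.norm_eq_abs, abs_of_pos hrpos, hr,
      inv_mul_cancel₀ (ne_of_gt hfX)]
  have hermX : X.IsHermitian := (pureState_isHermitian ψ).sub hρ.1.1
  have hermY : Y.IsHermitian := by
    rw [Matrix.IsHermitian, hY, Matrix.conjTranspose_smul, hermX.eq]
    congr 1
    simp [Complex.star_def, Complex.conj_ofReal]
  have hposY : posEigCount hermY ≤ 1 := by
    apply posEigCount_le_one hermY ψ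
    intro v hv
    have hPv : P *ᵥ v = 0 := pureState_mulVec_eq_zero ψ v hv
    have hXv : X *ᵥ v = -(ρ *ᵥ v) := by
      rw [hX, Matrix.sub_mulVec, hPv, zero_sub]
    have : star v ⬝ᵥ (Y *ᵥ v) = -((r : ℂ) * (star v ⬝ᵥ (ρ *ᵥ v))) := by
      rw [hY, Matrix.smul_mulVec, dotProduct_smul, hXv, dotProduct_neg]
      simp [smul_eq_mul]
    rw [this]
    have hρv : 0 ≤ star v ⬝ᵥ (ρ *ᵥ v) := hρ.1.dotProduct_mulVec_nonneg v
    have hrC : (0 : ℂ) ≤ (r : ℂ) := by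
      rw [← Complex.ofReal_zero, Complex.real_le_real]
      exact hrpos.le
    exact neg_nonpos.mpr (mul_nonneg hrC hρv)
  have hYK : Y ∈ Kset d := ⟨hermY, hposY, hfY⟩
  -- measMap Q' Y = 0
  have hQ'X : measMap Q' X = 0 := by
    rw [hX, measMap_sub, heq, sub_self]
  have hQ'Y : measMap Q' Y = 0 := by
    rw [hY, measMap_real_smul, hQ'X, smul_zero]
  have hTY : measMap Q Y - measMap Q' Y = measMap Q Y := by
    rw [hQ'Y, sub_zero]
  -- the chain of inequalities
  set S : Set ℝ := {r : ℝ | ∃ X ∈ Kset d, r = frobNorm (measMap Q X)} with hS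
  have hSb : BddBelow S := by
    refine ⟨0, ?_⟩
    rintro s ⟨Z, _, rfl⟩
    exact frobNorm_nonneg _
  have h1 : sInf S ≤ frobNorm (measMap Q Y) := csInf_le hSb ⟨Y, hYK, rfl⟩
  have h2 : frobNorm (measMap Q Y) ≤ opNormHerm (fun X => measMap Q X - measMap Q' X) := by
    apply le_csSup (opNormSet_bddAbove Q Q')
    exact ⟨Y, hermY, hfY, by rw [hTY]⟩
  linarith
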